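/- For the adele ring of ℚ, every adele can be written as the sum of a rational number, an element of ∏_p ℤ_p × {0}, and an element supported only at the Archimedean place; equivalently A_ℚ = ℚ + (Ẑ × ℝ). -/

import Mathlib

set_option synthInstance.maxHeartbeats 1000000
set_option maxHeartbeats 1000000


open IsDedekindDomain

namespace RatStrongApprox

open HeightOneSpectrum

lemma intVal_eq_one {w : HeightOneSpectrum ℤ} {d : ℤ} (hd : d ∉ w.asIdeal) :
    w.intValuation d = 1 := by
  rcases lt_or_eq_of_le (w.intValuation_le_one d) with h | h
  · exfalso
    rw [intValuation_lt_one_iff_dvd, Ideal.dvd_span_singleton] at h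
    exact hd h
  · exact h

lemma val_div_le (v : HeightOneSpectrum ℤ) {n d : ℤ} (hd : (d : ℚ) ≠ 0)
    (h1 : v.intValuation d = 1) : v.valuation ℚ ((n : ℚ) / (d : ℚ)) ≤ 1 := by
  have key : ((n : ℚ) / (d : ℚ)) * (d : ℚ) = (n : ℚ) := div_mul_cancel₀ _ hd
  have hvd : v.valuation ℚ ((d : ℤ) : ℚ) = 1 := by
    have := v.valuation_of_algebraMap (K := ℚ) d
    change v.valuation ℚ ((d : ℤ) : ℚ) = _ at this
    rw [this, h1]
  have hvn : v.valuation ℚ ((n : ℤ) : ℚ) ≤ 1 := by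
    have := v.valuation_le_one (K := ℚ) n
    change v.valuation ℚ ((n : ℤ) : ℚ) ≤ 1 at this; exact this
  calc v.valuation ℚ ((n : ℚ) / (d : ℚ))
      = v.valuation ℚ ((n : ℚ) / (d : ℚ)) * v.valuation ℚ ((d : ℤ) : ℚ) := by rw [hvd, mul_one]
    _ = v.valuation ℚ ((n : ℚ)) := by rw [← map_mul, key]
    _ ≤ 1 := hvn

lemma valued_algebraMap (v : HeightOneSpectrum ℤ) (q : ℚ) :
    Valued.v (algebraMap ℚ (v.adicCompletion ℚ) q) = v.valuation ℚ q := by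
  rw [show algebraMap ℚ (v.adicCompletion ℚ) q = _ from
    congrFun (algebraMap_adicCompletion (R := ℤ) (K := ℚ) (v := v)) q]
  exact valuedAdicCompletion_eq_valuation' v q

/-- Key local lemma: any element of `ℚ_v` differs from a rational `r` with denominator a power
of the prime of `v` by a `v`-adic integer; such `r` is integral at all other places. -/
lemma exists_rat_approx (v : HeightOneSpectrum ℤ) (x : v.adicCompletion ℚ) :
    ∃ r : ℚ, Valued.v (x - algebraMap ℚ (v.adicCompletion ℚ) r) ≤ 1 ∧
      ∀ w : HeightOneSpectrum ℤ, w ≠ v → w.valuation ℚ r ≤ 1 := by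
  -- Step 1: density gives a rational q with x - q integral at v
  have hdense : DenseRange (algebraMap ℚ (v.adicCompletion ℚ)) := by
    rw [algebraMap_adicCompletion (R := ℤ) (K := ℚ) (v := v)]
    exact denseRange_algebraMap (R := ℤ) (K := ℚ) (v := v)
  have hopen : IsOpen {y : v.adicCompletion ℚ | x - y ∈ v.adicCompletionIntegers ℚ} := by
    have : {y : v.adicCompletion ℚ | x - y ∈ v.adicCompletionIntegers ℚ} =
        (fun y => x - y) ⁻¹' (v.adicCompletionIntegers ℚ : Set (v.adicCompletion ℚ)) := rfl
    rw [this]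
    exact (Valued.isOpen_valuationSubring _).preimage (continuous_const.sub continuous_id)
  have hne : x ∈ {y : v.adicCompletion ℚ | x - y ∈ v.adicCompletionIntegers ℚ} := by
    simp [mem_adicCompletionIntegers]
  obtain ⟨q, hq⟩ := hdense.exists_mem_open hopen ⟨x, hne⟩
  -- Step 2: the prime p generating v
  obtain ⟨p, hp'⟩ := (IsPrincipalIdealRing.principal v.asIdeal).principal
  have hp : v.asIdeal = Ideal.span {p} := hp'
  clear hp'
  have hp0 : p ≠ 0 := by
    rintro rfl
    exact v.ne_bot (hp.trans (Ideal.span_singleton_eq_bot.mpr rfl))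
  have hpprime : Prime p := by
    rw [← Ideal.span_singleton_prime hp0, ← hp]; exact v.isPrime
  set p' : ℕ := p.natAbs with hp'def
  have hp'prime : p'.Prime := Int.prime_iff_natAbs_prime.mp hpprime
  set den : ℕ := q.den with hden
  have hden0 : den ≠ 0 := q.den_nz
  set k : ℕ := den.factorization p' with hk
  set m : ℕ := den / p' ^ k with hm
  have hsplit : p' ^ k * m = den := Nat.ordProj_mul_ordCompl_eq_self den p'
  have hndvd : ¬ p' ∣ m := Nat.not_dvd_ordCompl hp'prime hden0
  have hm0 : m ≠ 0 := by
    rintro h; rw [h, mul_zero] at hsplit; exact hden0 hsplit.symm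
  have hcop : IsCoprime ((p' ^ k : ℕ) : ℤ) ((m : ℕ) : ℤ) := by
    rw [Nat.isCoprime_iff_coprime]
    exact Nat.Coprime.pow_left k ((Nat.Prime.coprime_iff_not_dvd hp'prime).mpr hndvd)
  obtain ⟨u, t, hut⟩ := hcop
  -- the decomposition q = r + s
  set P : ℤ := ((p' ^ k : ℕ) : ℤ) with hP
  set M : ℤ := ((m : ℕ) : ℤ) with hM
  have hP0 : (P : ℚ) ≠ 0 := by
    simp [hP, pow_ne_zero, hp'prime.ne_zero]
  have hM0 : (M : ℚ) ≠ 0 := by simp [hM, hm0]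
  set r : ℚ := ((q.num * t : ℤ) : ℚ) / (P : ℚ) with hr
  set s : ℚ := ((q.num * u : ℤ) : ℚ) / (M : ℚ) with hs
  have hq_eq : q = r + s := by
    have hq' : q = (q.num : ℚ) / ((den : ℕ) : ℚ) := (Rat.num_div_den q).symm
    have hden' : ((den : ℕ) : ℚ) = (P : ℚ) * (M : ℚ) := by
      rw [hP, hM]
      push_cast [← hsplit]
      ring
    have hut' : (u : ℚ) * (P : ℚ) + (t : ℚ) * (M : ℚ) = 1 := by
      have := congrArg (fun z : ℤ => (z : ℚ)) hut
      push_cast at this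
      simpa using this
    rw [hq', hden', hr, hs]
    field_simp
    push_cast
    linear_combination (-(q.num : ℚ)) * hut'
  have hrval : ∀ w : HeightOneSpectrum ℤ, w ≠ v → w.valuation ℚ r ≤ 1 := by
    intro w hwv
    apply val_div_le w hP0
    apply intVal_eq_one
    intro hPmem
    have hpmem : p ∈ w.asIdeal := by
      have h1 : ((p' : ℕ) : ℤ) ∈ w.asIdeal := by
        rcases k.eq_zero_or_pos with hk0 | hk0
        · exfalso
          rw [hP, hk0, pow_zero] at hPmem
          exact w.isPrime.ne_top (Ideal.eq_top_of_isUnit_mem _ (by simpa using hPmem) isUnit_one)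
        · exact w.isPrime.mem_of_pow_mem k (by rwa [hP, Nat.cast_pow] at hPmem)
      exact Ideal.mem_of_dvd w.asIdeal (Int.natAbs_dvd.mpr dvd_rfl) h1
    have hle : v.asIdeal ≤ w.asIdeal := by
      rw [hp, Ideal.span_singleton_le_iff_mem]; exact hpmem
    have : v.asIdeal = w.asIdeal := (v.isMaximal.eq_of_le w.isPrime.ne_top hle)
    exact hwv (HeightOneSpectrum.ext this.symm)
  have hsval : v.valuation ℚ s ≤ 1 := by
    apply val_div_le v hM0
    apply intVal_eq_one
    intro hMmem
    rw [hp, Ideal.mem_span_singleton] at hMmem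
    have : (p' : ℤ) ∣ M := (Int.natAbs_dvd).mpr hMmem
    rw [hM] at this
    exact hndvd (Int.ofNat_dvd.mp this)
  refine ⟨r, ?_, hrval⟩
  have hxr : x - algebraMap ℚ (v.adicCompletion ℚ) r =
      (x - algebraMap ℚ (v.adicCompletion ℚ) q) + algebraMap ℚ (v.adicCompletion ℚ) s := by
    rw [hq_eq, RingHom.map_add]; ring
  rw [hxr]
  refine le_trans (Valued.v.map_add _ _) (max_le ?_ ?_)
  · exact hq
  · rw [valued_algebraMap]; exact hsval

/-- Inductive step over the finitely many bad places. -/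
lemma exists_rat_sub_integral_aux (s : Finset (HeightOneSpectrum ℤ)) :
    ∀ a : FiniteAdeleRing ℤ ℚ, (∀ v ∉ s, a v ∈ v.adicCompletionIntegers ℚ) →
      ∃ q : ℚ, ∀ v : HeightOneSpectrum ℤ,
        (a - algebraMap ℚ (FiniteAdeleRing ℤ ℚ) q) v ∈ v.adicCompletionIntegers ℚ := by
  classical
  induction s using Finset.induction_on with
  | empty =>
    intro a h
    refine ⟨0, fun v => ?_⟩
    rw [map_zero, sub_zero]
    exact h v (Finset.notMem_empty v)
  | @insert v₀ s' hv₀ ih =>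
    intro a h
    obtain ⟨r, hr1, hr2⟩ := exists_rat_approx v₀ (a v₀)
    have hside : ∀ v ∉ s', (a - algebraMap ℚ (FiniteAdeleRing ℤ ℚ) r) v ∈
        v.adicCompletionIntegers ℚ := by
      intro v hv
      have hcoord : (a - algebraMap ℚ (FiniteAdeleRing ℤ ℚ) r) v =
          a v - algebraMap ℚ (v.adicCompletion ℚ) r := rfl
      by_cases hveq : v = v₀
      · subst hveq
        rw [hcoord, mem_adicCompletionIntegers]
        exact hr1
      · have h1 : a v ∈ v.adicCompletionIntegers ℚ :=
          h v (by simp [Finset.mem_insert, hveq, hv])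
        have h2 : algebraMap ℚ (v.adicCompletion ℚ) r ∈ v.adicCompletionIntegers ℚ := by
          rw [mem_adicCompletionIntegers, valued_algebraMap]
          exact hr2 v hveq
        rw [hcoord]
        exact sub_mem h1 h2
    obtain ⟨q', hq'⟩ := ih (a - algebraMap ℚ (FiniteAdeleRing ℤ ℚ) r) hside
    refine ⟨r + q', fun v => ?_⟩
    have heq : a - algebraMap ℚ (FiniteAdeleRing ℤ ℚ) (r + q') =
        (a - algebraMap ℚ (FiniteAdeleRing ℤ ℚ) r) - algebraMap ℚ (FiniteAdeleRing ℤ ℚ) q' := by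
      rw [RingHom.map_add]; ring
    rw [heq]
    exact hq' v

lemma exists_rat_sub_integral (a : FiniteAdeleRing ℤ ℚ) :
    ∃ q : ℚ, ∀ v : HeightOneSpectrum ℤ,
      (a - algebraMap ℚ (FiniteAdeleRing ℤ ℚ) q) v ∈ v.adicCompletionIntegers ℚ := by
  have hfin : {v : HeightOneSpectrum ℤ | a v ∉ v.adicCompletionIntegers ℚ}.Finite := a.2
  exact exists_rat_sub_integral_aux hfin.toFinset a
    (fun v hv => by simpa using (Set.Finite.mem_toFinset hfin).not.mp hv)

end RatStrongApprox

/-- The adele ring of `ℚ`: the product of the Archimedean completion `ℝ` with the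
finite adele ring (the restricted product of the `ℚ_p` with respect to the `ℤ_p`). -/
abbrev RatAdeleRing : Type := ℝ × FiniteAdeleRing ℤ ℚ

/-- Strong approximation decomposition for `ℚ`: every adele is the sum of a (diagonally
embedded) rational number, an element of `∏_p ℤ_p × {0}` (an adele with zero Archimedean
component which is integral at every prime), and an element supported only at the
Archimedean place; i.e. `A_ℚ = ℚ + (Ẑ × ℝ)`. -/
theorem ratAdeleRing_eq_rat_add_zhat_prod_real (a : RatAdeleRing) :
    ∃ (q : ℚ) (r : ℝ) (z : FiniteAdeleRing ℤ ℚ),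
      (∀ v : HeightOneSpectrum ℤ, z v ∈ v.adicCompletionIntegers ℚ) ∧
      a = algebraMap ℚ RatAdeleRing q + (r, z) := by
  obtain ⟨q, hq⟩ := RatStrongApprox.exists_rat_sub_integral a.2
  refine ⟨q, a.1 - algebraMap ℚ ℝ q, a.2 - algebraMap ℚ (FiniteAdeleRing ℤ ℚ) q, hq, ?_⟩
  have hmap : algebraMap ℚ RatAdeleRing q =
      (algebraMap ℚ ℝ q, algebraMap ℚ (FiniteAdeleRing ℤ ℚ) q) := rfl
  rw [hmap, Prod.mk_add_mk, Prod.ext_iff]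
  constructor <;> simp <;> ring
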